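/- Let Λ ⊂ ℕ² be a finite downward closed set and define the sparse interpolation operator I_Λ = ∑_{ν ∈ Λ} Δ_{ν_1}^{(1)} Δ_{ν_2}^{(2)}. Then for every g : ℝ × ℝ → ℝ, the sparse interpolant reproduces g at the associated sparse grid: (I_Λ g)(z_{ν_1}, z_{ν_2}) = g(z_{ν_1}, z_{ν_2}) for every ν = (ν_1, ν_2) ∈ Λ. -/

import Mathlib

/-- `interpOp z k g` is (the evaluation function of) the unique polynomial of degree `< k`
interpolating `g` at the first `k` nodes `z_0, …, z_{k-1}`.  In particular `interpOp z 0`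
is the zero operator, so the paper's operator `I_k` is `interpOp z (k+1)` and
`I_{-1} = interpOp z 0 = 0`. -/
noncomputable def interpOp (z : ℕ → ℝ) (k : ℕ) (g : ℝ → ℝ) : ℝ → ℝ :=
  fun x => (Lagrange.interpolate (Finset.range k) z (fun i => g (z i))).eval x

/-- The slice operator interpolating in the first variable with the second frozen;
the paper's `I_k^{(1)}` is `sliceInterp1 z (k+1)`. -/
noncomputable def sliceInterp1 (z : ℕ → ℝ) (k : ℕ) (g : ℝ × ℝ → ℝ) : ℝ × ℝ → ℝ :=
  fun p => interpOp z k (fun t => g (t, p.2)) p.1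

/-- The slice operator interpolating in the second variable with the first frozen;
the paper's `I_l^{(2)}` is `sliceInterp2 z (l+1)`. -/
noncomputable def sliceInterp2 (z : ℕ → ℝ) (l : ℕ) (g : ℝ × ℝ → ℝ) : ℝ × ℝ → ℝ :=
  fun p => interpOp z l (fun t => g (p.1, t)) p.2

/-- The slice difference operator `Δ_k^{(1)} = I_k^{(1)} - I_{k-1}^{(1)}`. -/
noncomputable def sliceDelta1 (z : ℕ → ℝ) (k : ℕ) (g : ℝ × ℝ → ℝ) : ℝ × ℝ → ℝ :=
  fun p => sliceInterp1 z (k + 1) g p - sliceInterp1 z k g p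

/-- The slice difference operator `Δ_l^{(2)} = I_l^{(2)} - I_{l-1}^{(2)}`. -/
noncomputable def sliceDelta2 (z : ℕ → ℝ) (l : ℕ) (g : ℝ × ℝ → ℝ) : ℝ × ℝ → ℝ :=
  fun p => sliceInterp2 z (l + 1) g p - sliceInterp2 z l g p

/-- A finite set `Λ ⊆ ℕ²` of multi-indices is downward closed if `ν ∈ Λ` and
`μ_i ≤ ν_i` for `i = 1, 2` imply `μ ∈ Λ`. -/
def DownwardClosed (Λ : Finset (ℕ × ℕ)) : Prop :=
  ∀ ν ∈ Λ, ∀ μ : ℕ × ℕ, μ.1 ≤ ν.1 → μ.2 ≤ ν.2 → μ ∈ Λ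

/-- The sparse interpolation operator `I_Λ = ∑_{ν ∈ Λ} Δ_{ν₁}^{(1)} Δ_{ν₂}^{(2)}`. -/
noncomputable def sparseInterp (z : ℕ → ℝ) (Λ : Finset (ℕ × ℕ)) (g : ℝ × ℝ → ℝ) :
    ℝ × ℝ → ℝ :=
  fun p => ∑ ν ∈ Λ, sliceDelta1 z ν.1 (sliceDelta2 z ν.2 g) p


section Aux

variable (z : ℕ → ℝ)

lemma interpOp_node (hdist : Function.Injective z) {k a : ℕ} (ha : a < k)
    (g : ℝ → ℝ) : interpOp z k g (z a) = g (z a) :=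
  Lagrange.eval_interpolate_at_node _ hdist.injOn (Finset.mem_range.mpr ha)

lemma interpOp_eq_zero {k : ℕ} {g : ℝ → ℝ} (hg : ∀ i, g (z i) = 0) (x : ℝ) :
    interpOp z k g x = 0 := by
  have h : (fun i => g (z i)) = (0 : ℕ → ℝ) := funext fun i => hg i
  simp only [interpOp, h, map_zero, Polynomial.eval_zero]

lemma interpOp_sub {k : ℕ} (f h : ℝ → ℝ) (x : ℝ) :
    interpOp z k (fun t => f t - h t) x = interpOp z k f x - interpOp z k h x := by
  have : (fun i => (fun t => f t - h t) (z i)) =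
      (fun i => f (z i)) - (fun i => h (z i)) := rfl
  simp only [interpOp, this, map_sub, Polynomial.eval_sub]

end Aux

/-- For a finite downward closed set `Λ ⊆ ℕ²`, the sparse interpolant reproduces `g`
at the associated sparse grid: `(I_Λ g)(z_{ν₁}, z_{ν₂}) = g(z_{ν₁}, z_{ν₂})` for every
`ν ∈ Λ`. -/
theorem sparse_interp_reproduces_at_sparse_grid
    (z : ℕ → ℝ) (hdist : Function.Injective z)
    (hmem : ∀ k, z k ∈ Set.Icc (-1 : ℝ) 1)
    (Λ : Finset (ℕ × ℕ)) (hΛ : DownwardClosed Λ)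
    (g : ℝ × ℝ → ℝ) :
    ∀ ν ∈ Λ, sparseInterp z Λ g (z ν.1, z ν.2) = g (z ν.1, z ν.2) := by
  rintro ⟨a, b⟩ hν
  classical
  set p : ℝ × ℝ := (z a, z b) with hp
  -- the mixed interpolants
  set T : ℕ → ℕ → ℝ := fun m n => sliceInterp1 z m (sliceInterp2 z n g) p with hT
  set D : ℕ × ℕ → ℝ := fun μ => sliceDelta1 z μ.1 (sliceDelta2 z μ.2 g) p with hD
  have hDsplit : ∀ k l : ℕ,
      D (k, l) = (T (k+1) (l+1) - T (k+1) l) - (T k (l+1) - T k l) := by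
    intro k l
    have hsplit : ∀ m : ℕ, sliceInterp1 z m (sliceDelta2 z l g) p = T m (l+1) - T m l := by
      intro m
      simp only [hT, sliceInterp1, sliceDelta2]
      exact interpOp_sub z _ _ _
    simp only [hD, sliceDelta1, hsplit]
  set rect : Finset (ℕ × ℕ) := Finset.range (a+1) ×ˢ Finset.range (b+1) with hrect
  -- restrict the sum to the rectangle
  have hsub : rect ⊆ Λ := by
    intro μ hμ
    rw [hrect, Finset.mem_product, Finset.mem_range, Finset.mem_range] at hμ
    exact hΛ (a, b) hν μ (Nat.lt_succ_iff.mp hμ.1) (Nat.lt_succ_iff.mp hμ.2)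
  have hvanish : ∀ μ ∈ Λ, μ ∉ rect → D μ = 0 := by
    rintro ⟨k, l⟩ _ hμ
    rw [hrect, Finset.mem_product] at hμ
    push_neg at hμ
    by_cases hk : k ∈ Finset.range (a+1)
    · -- then b < l
      have hl : b < l := by
        have := hμ hk
        have h2 : ¬ l < b + 1 := Finset.mem_range.not.mp this
        omega
      -- the inner function vanishes on the line y = z b
      have hin : ∀ t : ℝ, sliceDelta2 z l g (t, z b) = 0 := by
        intro t
        simp only [sliceDelta2, sliceInterp2]
        rw [interpOp_node z hdist (Nat.lt_succ_of_lt hl), interpOp_node z hdist hl]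
        ring
      have hzero : ∀ m : ℕ, sliceInterp1 z m (sliceDelta2 z l g) p = 0 := by
        intro m
        simp only [sliceInterp1, hp]
        exact interpOp_eq_zero z (fun i => hin (z i)) _
      simp only [hD, sliceDelta1, hzero, sub_zero]
    · -- then a < k
      have hk' : a < k := by
        have := Finset.mem_range.not.mp hk
        omega
      have hrep : ∀ m : ℕ, a < m →
          sliceInterp1 z m (sliceDelta2 z l g) p = sliceDelta2 z l g p := by
        intro m hm
        simp only [sliceInterp1, hp]
        exact interpOp_node z hdist hm _
      simp only [hD, sliceDelta1, hrep _ (Nat.lt_succ_of_lt hk'), hrep _ hk', sub_self]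
  have hsum : sparseInterp z Λ g p = ∑ μ ∈ rect, D μ := by
    simp only [sparseInterp]
    exact (Finset.sum_subset hsub (fun μ hμ hμ' => hvanish μ hμ hμ')).symm
  -- telescope over the rectangle
  have htel : ∑ μ ∈ rect, D μ =
      (T (a+1) (b+1) - T (a+1) 0) - (T 0 (b+1) - T 0 0) := by
    rw [hrect, Finset.sum_product]
    have hinner : ∀ k : ℕ, ∑ l ∈ Finset.range (b+1), D (k, l) =
        (T (k+1) (b+1) - T (k+1) 0) - (T k (b+1) - T k 0) := by
      intro k
      simp only [hDsplit]
      rw [Finset.sum_sub_distrib, Finset.sum_range_sub, Finset.sum_range_sub]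
    simp only [hinner]
    exact Finset.sum_range_sub (fun k => T k (b+1) - T k 0) (a+1)
  -- boundary values
  have hT00 : ∀ n, T 0 n = 0 := by
    intro n
    simp only [hT, sliceInterp1, interpOp, Finset.range_zero, Lagrange.interpolate_empty,
      Polynomial.eval_zero]
  have hTm0 : ∀ m, T m 0 = 0 := by
    intro m
    simp only [hT, sliceInterp1]
    refine interpOp_eq_zero z (fun i => ?_) _
    simp only [sliceInterp2, interpOp, Finset.range_zero, Lagrange.interpolate_empty,
      Polynomial.eval_zero]
  have hTab : T (a+1) (b+1) = g p := by
    simp only [hT, sliceInterp1, hp]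
    rw [interpOp_node z hdist (Nat.lt_succ_self a)]
    simp only [sliceInterp2]
    exact interpOp_node z hdist (Nat.lt_succ_self b) _
  rw [hsum, htel, hTab, hTm0, hT00, hT00]
  ring
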